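/- Let f be a convex normal integrand on ℝⁿ×Ω with filtration (F_t)_{t=0}^T, and let x ∈ N^∞ (bounded adapted). If v ∈ L¹ is a measurable selection of ∂f(x), i.e. v(ω) ∈ ∂f(x(ω),ω) a.s., then the adapted projection ᵒv defined by (ᵒv)_t = E[v_t | F_t] is a subgradient of the integral functional Ef restricted to N^∞ at x: Ef(x') ≥ Ef(x) + E(x'·ᵒv − x·ᵒv) for all x' ∈ N^∞. -/

import Mathlib

open MeasureTheory
open scoped ENNReal

/-- Positive part of an extended real as an `ℝ≥0∞`. -/
noncomputable def epos (x : EReal) : ℝ≥0∞ := if x = ⊤ then ⊤ else ENNReal.ofReal x.toReal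

/-- Expectation of an extended-real function: `+∞` unless the positive part is integrable. -/
noncomputable def eexp {Ω : Type*} [MeasurableSpace Ω] (μ : Measure Ω) (f : Ω → EReal) : EReal :=
  if ∫⁻ ω, epos (f ω) ∂μ = ⊤ then ⊤
  else ((∫⁻ ω, epos (f ω) ∂μ : ℝ≥0∞) : EReal) - ((∫⁻ ω, epos (-(f ω)) ∂μ : ℝ≥0∞) : EReal)

/-- Pairing `x·y = ∑_t x_t·y_t` on `∏_t ℝ^{n_t}`. -/
noncomputable def dotp {T : ℕ} {n : Fin (T + 1) → ℕ} (x y : ∀ t, Fin (n t) → ℝ) : ℝ :=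
  ∑ t, ∑ i, x t i * y t i

/-- The value function `φ(z) = inf_{x ∈ N} E h(x + z)` of (SP), where the infimum is over
all adapted strategies. -/
noncomputable def phiSP {T : ℕ} {n : Fin (T + 1) → ℕ} {Ω : Type*} (mF : MeasurableSpace Ω)
    (μ : @Measure Ω mF) (F : Fin (T + 1) → MeasurableSpace Ω)
    (h : (∀ t, Fin (n t) → ℝ) → Ω → EReal) (z : Ω → ∀ t, Fin (n t) → ℝ) : EReal :=
  ⨅ x : {x : Ω → ∀ t, Fin (n t) → ℝ // ∀ t, Measurable[F t] fun ω => x ω t},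
    @eexp Ω mF μ (fun ω => h (x.1 ω + z ω) ω)

/-- Adapted (optional) projection: `(ᵒv)_t = E[v_t | F_t]`. -/
noncomputable def aproj {T : ℕ} {n : Fin (T + 1) → ℕ} {Ω : Type*} (mF : MeasurableSpace Ω)
    (μ : @Measure Ω mF) (F : Fin (T + 1) → MeasurableSpace Ω)
    (v : Ω → ∀ t, Fin (n t) → ℝ) : Ω → ∀ t, Fin (n t) → ℝ :=
  fun ω t => (MeasureTheory.condExp (α := Ω) (E := Fin (n t) → ℝ) (m₀ := mF) (F t) μ
    (fun ω' => v ω' t)) ω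

/-! ### Auxiliary lemmas -/

section Aux

lemma pi_integrable_coord {ι : Type*} [Fintype ι] {E : ι → Type*}
    [∀ i, NormedAddCommGroup (E i)] [∀ i, NormedSpace ℝ (E i)]
    {Ω : Type*} {mΩ : MeasurableSpace Ω} {μ : Measure Ω}
    {V : Ω → ∀ i, E i} (hV : Integrable V μ) (i : ι) :
    Integrable (fun ω => V ω i) μ :=
  (ContinuousLinearMap.proj (R := ℝ) (φ := E) i).integrable_comp hV

lemma pi_integral_coord {ι : Type*} [Fintype ι] {Ω : Type*} {mΩ : MeasurableSpace Ω}
    {μ : Measure Ω} {k : ι → ℕ} {V : Ω → ∀ i, Fin (k i) → ℝ} (hV : Integrable V μ) (i : ι) :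
    ∫ ω, V ω i ∂μ = (∫ ω, V ω ∂μ) i := by
  have := (ContinuousLinearMap.proj (R := ℝ) (φ := fun i => Fin (k i) → ℝ) i).integral_comp_comm hV
  simpa using this

lemma integrable_coord {Ω : Type*} {mΩ : MeasurableSpace Ω} {μ : Measure Ω}
    {k : ℕ} {V : Ω → Fin k → ℝ} (hV : Integrable V μ) (i : Fin k) :
    Integrable (fun ω => V ω i) μ :=
  (ContinuousLinearMap.proj (R := ℝ) (φ := fun _ : Fin k => ℝ) i).integrable_comp hV

lemma integral_coord {Ω : Type*} {mΩ : MeasurableSpace Ω} {μ : Measure Ω}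
    {k : ℕ} {V : Ω → Fin k → ℝ} (hV : Integrable V μ) (i : Fin k) :
    ∫ ω, V ω i ∂μ = (∫ ω, V ω ∂μ) i := by
  have := (ContinuousLinearMap.proj (R := ℝ) (φ := fun _ : Fin k => ℝ) i).integral_comp_comm hV
  simpa using this

lemma condexp_coord {Ω : Type*} {mF : MeasurableSpace Ω} (μ : Measure Ω) [IsProbabilityMeasure μ]
    (m : MeasurableSpace Ω) (hm : m ≤ mF) {k : ℕ} (V : Ω → Fin k → ℝ) (hV : Integrable V μ)
    (i : Fin k) :
    (fun ω => (μ[V|m]) ω i) =ᵐ[μ] μ[fun ω => V ω i|m] := by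
  haveI : SigmaFinite (μ.trim hm) := by
    haveI : IsFiniteMeasure (μ.trim hm) := isFiniteMeasure_trim _
    infer_instance
  have hce : Integrable (μ[V|m]) μ := integrable_condExp
  refine ae_eq_condExp_of_forall_setIntegral_eq hm
    (@integrable_coord Ω mF μ k V hV i)
    (fun s hs _ => @integrable_coord Ω mF (μ.restrict s) k _ hce.restrict i)
    (fun s hs hμs => ?_) ?_
  · rw [@integral_coord Ω mF (μ.restrict s) k _ hce.restrict i,
      setIntegral_condExp (m := m) hm hV hs,
      @integral_coord Ω mF (μ.restrict s) k V hV.restrict i]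
  · exact StronglyMeasurable.aestronglyMeasurable
      ((continuous_apply i).comp_stronglyMeasurable stronglyMeasurable_condExp)

lemma integral_mul_condexp {Ω : Type*} {mF : MeasurableSpace Ω} (μ : Measure Ω)
    [IsProbabilityMeasure μ] (m : MeasurableSpace Ω) (hm : m ≤ mF)
    (w h : Ω → ℝ) (hw : Measurable[m] w) (C : ℝ) (hwb : ∀ ω, ‖w ω‖ ≤ C)
    (hh : Integrable h μ) :
    ∫ ω, w ω * (μ[h|m]) ω ∂μ = ∫ ω, w ω * h ω ∂μ := by
  haveI : SigmaFinite (μ.trim hm) := by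
    haveI : IsFiniteMeasure (μ.trim hm) := isFiniteMeasure_trim _
    infer_instance
  have hwsm : StronglyMeasurable[m] w := hw.stronglyMeasurable
  have hwmF : AEStronglyMeasurable[mF] w μ :=
    (hw.mono hm le_rfl).stronglyMeasurable.aestronglyMeasurable
  have hwh : Integrable (w * h) μ := by
    have := hh.bdd_mul hwmF (Filter.Eventually.of_forall hwb)
    simpa [Pi.mul_def] using this
  have key : μ[w * h|m] =ᵐ[μ] w * μ[h|m] :=
    condExp_mul_of_stronglyMeasurable_left hwsm hwh hh
  calc ∫ ω, w ω * (μ[h|m]) ω ∂μ = ∫ ω, (μ[w * h|m]) ω ∂μ := by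
        refine integral_congr_ae ?_
        filter_upwards [key] with ω hω
        simp [hω]
    _ = ∫ ω, w ω * h ω ∂μ := by
        rw [integral_condExp hm]; rfl

lemma measurable_epos : Measurable epos := by
  unfold epos
  refine Measurable.ite (by simp [MeasurableSet.singleton, Set.setOf_eq_eq_singleton])
    measurable_const ?_
  exact ENNReal.measurable_ofReal.comp measurable_ereal_toReal

lemma epos_top : epos ⊤ = ⊤ := rfl

lemma epos_real (r : ℝ) : epos (r : EReal) = ENNReal.ofReal r := by
  simp [epos]

lemma epos_ne_top (x : EReal) (hx : x ≠ ⊤) : epos x = ENNReal.ofReal x.toReal := if_neg hx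

lemma epos_le_of_le_add {a b : EReal} {g : ℝ} (h : a + (g : EReal) ≤ b) :
    epos a ≤ epos b + ENNReal.ofReal |g| := by
  induction a using EReal.rec with
  | bot => simp [epos]
  | top =>
      have : b = ⊤ := top_le_iff.mp (by simpa using h)
      simp [this, epos_top]
  | coe r =>
      induction b using EReal.rec with
      | bot => simp [← EReal.coe_add] at h
      | top => simp [epos_top]
      | coe s =>
          rw [← EReal.coe_add, EReal.coe_le_coe_iff] at h
          rw [epos_real, epos_real]
          calc ENNReal.ofReal r ≤ ENNReal.ofReal (s + |g|) := by
                refine ENNReal.ofReal_le_ofReal ?_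
                have : -g ≤ |g| := neg_le_abs g
                linarith
            _ ≤ ENNReal.ofReal s + ENNReal.ofReal |g| := ENNReal.ofReal_add_le

lemma ereal_coe_ennreal_sub (p q : ℝ≥0∞) (hp : p ≠ ⊤) (hq : q ≠ ⊤) :
    (p : EReal) - (q : EReal) = ((p.toReal - q.toReal : ℝ) : EReal) := by
  have hp' : (p : EReal) ≠ ⊤ := by simp [hp]
  have hq' : (q : EReal) ≠ ⊤ := by simp [hq]
  rw [← EReal.coe_toReal hp' (by simp), ← EReal.coe_toReal hq' (by simp), ← EReal.coe_sub]
  norm_cast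
  rw [EReal.toReal_coe_ennreal, EReal.toReal_coe_ennreal]

lemma eexp_eq_integral {Ω : Type*} [mΩ : MeasurableSpace Ω] (μ : Measure Ω)
    (A : Ω → EReal) (hA : Measurable A) (hbot : ∀ᵐ ω ∂μ, A ω ≠ ⊥)
    (hP : ∫⁻ ω, epos (A ω) ∂μ ≠ ⊤) (hN : ∫⁻ ω, epos (-(A ω)) ∂μ ≠ ⊤) :
    Integrable (fun ω => (A ω).toReal) μ ∧
      eexp μ A = ((∫ ω, (A ω).toReal ∂μ : ℝ) : EReal) := by
  have htop : ∀ᵐ ω ∂μ, A ω ≠ ⊤ := by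
    filter_upwards [ae_lt_top (measurable_epos.comp hA) hP] with ω hω
    intro h; simp [Function.comp, h, epos_top] at hω
  set a : Ω → ℝ := fun ω => (A ω).toReal with ha
  have hameas : Measurable a := measurable_ereal_toReal.comp hA
  have hpos : ∀ᵐ ω ∂μ, epos (A ω) = ENNReal.ofReal (a ω) := by
    filter_upwards [htop] with ω hω; exact epos_ne_top _ hω
  have hneg : ∀ᵐ ω ∂μ, epos (-(A ω)) = ENNReal.ofReal (-(a ω)) := by
    filter_upwards [hbot] with ω hω
    rw [epos_ne_top _ (by simpa using hω), EReal.toReal_neg_eq]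
  have hPa : ∫⁻ ω, epos (A ω) ∂μ = ∫⁻ ω, ENNReal.ofReal (a ω) ∂μ := lintegral_congr_ae hpos
  have hNa : ∫⁻ ω, epos (-(A ω)) ∂μ = ∫⁻ ω, ENNReal.ofReal (-(a ω)) ∂μ := lintegral_congr_ae hneg
  have hInt : Integrable a μ := by
    refine ⟨hameas.aestronglyMeasurable, ?_⟩
    rw [hasFiniteIntegral_iff_norm]
    have hb : ∀ ω, ENNReal.ofReal ‖a ω‖ ≤ ENNReal.ofReal (a ω) + ENNReal.ofReal (-(a ω)) := by
      intro ω
      rcases le_total 0 (a ω) with h | h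
      · refine le_trans (ENNReal.ofReal_le_ofReal ?_) le_self_add
        rw [Real.norm_eq_abs, abs_of_nonneg h]
      · refine le_trans (ENNReal.ofReal_le_ofReal ?_) le_add_self
        rw [Real.norm_eq_abs, abs_of_nonpos h]
    calc ∫⁻ ω, ENNReal.ofReal ‖a ω‖ ∂μ
        ≤ ∫⁻ ω, (ENNReal.ofReal (a ω) + ENNReal.ofReal (-(a ω))) ∂μ := lintegral_mono hb
      _ = (∫⁻ ω, ENNReal.ofReal (a ω) ∂μ) + ∫⁻ ω, ENNReal.ofReal (-(a ω)) ∂μ :=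
          lintegral_add_left (ENNReal.measurable_ofReal.comp hameas) _
      _ < ⊤ := by
          rw [← hPa, ← hNa]
          exact ENNReal.add_lt_top.mpr ⟨lt_top_iff_ne_top.mpr hP, lt_top_iff_ne_top.mpr hN⟩
  refine ⟨hInt, ?_⟩
  rw [eexp, if_neg hP, hPa, hNa,
    ereal_coe_ennreal_sub _ _ (by rw [← hPa]; exact hP) (by rw [← hNa]; exact hN)]
  rw [integral_eq_lintegral_pos_part_sub_lintegral_neg_part hInt]

lemma epos_neg_le {a b : EReal} {g : ℝ} (ha : a ≠ ⊥) (hb : b ≠ ⊥) (h : a + (g : EReal) ≤ b) :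
    epos (-b) ≤ epos (-a) + ENNReal.ofReal |g| := by
  induction a using EReal.rec with
  | bot => exact absurd rfl ha
  | top =>
      have : b = ⊤ := top_le_iff.mp (by simpa using h)
      simp [this, epos]
  | coe r =>
      induction b using EReal.rec with
      | bot => exact absurd rfl hb
      | top => simp [epos]
      | coe s =>
          rw [← EReal.coe_add, EReal.coe_le_coe_iff] at h
          rw [← EReal.coe_neg, ← EReal.coe_neg, epos_real, epos_real]
          calc ENNReal.ofReal (-s) ≤ ENNReal.ofReal (-r + |g|) := by
                refine ENNReal.ofReal_le_ofReal ?_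
                have : -g ≤ |g| := neg_le_abs g
                linarith
            _ ≤ ENNReal.ofReal (-r) + ENNReal.ofReal |g| := ENNReal.ofReal_add_le

lemma eexp_add_le {Ω : Type*} [mΩ : MeasurableSpace Ω] (μ : Measure Ω) [IsProbabilityMeasure μ]
    (A B : Ω → EReal) (g : Ω → ℝ) (hA : Measurable A) (hB : Measurable B)
    (hg : Integrable g μ) (hAbot : ∀ᵐ ω ∂μ, A ω ≠ ⊥) (hBbot : ∀ᵐ ω ∂μ, B ω ≠ ⊥)
    (hle : ∀ᵐ ω ∂μ, A ω + ((g ω : ℝ) : EReal) ≤ B ω) :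
    eexp μ A + ((∫ ω, g ω ∂μ : ℝ) : EReal) ≤ eexp μ B := by
  set P := ∫⁻ ω, epos (A ω) ∂μ with hPdef
  set N := ∫⁻ ω, epos (-(A ω)) ∂μ with hNdef
  set P' := ∫⁻ ω, epos (B ω) ∂μ with hP'def
  set N' := ∫⁻ ω, epos (-(B ω)) ∂μ with hN'def
  set G := ∫⁻ ω, ENNReal.ofReal |g ω| ∂μ with hGdef
  have hGfin : G ≠ ⊤ := by
    have := hg.hasFiniteIntegral
    rw [hasFiniteIntegral_iff_norm] at this
    simp only [hGdef, Real.norm_eq_abs] at this ⊢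
    exact this.ne
  by_cases hP' : P' = ⊤
  · have : eexp μ B = ⊤ := by rw [eexp, if_pos hP']
    rw [this]; exact le_top
  have hPle : P ≤ P' + G := by
    calc P ≤ ∫⁻ ω, (epos (B ω) + ENNReal.ofReal |g ω|) ∂μ := by
          refine lintegral_mono_ae ?_
          filter_upwards [hle] with ω hω
          exact epos_le_of_le_add hω
      _ = P' + G := lintegral_add_left (measurable_epos.comp hB) _
  have hP : P ≠ ⊤ := by
    intro h
    rw [h] at hPle
    exact hP' (by simpa [ENNReal.add_eq_top, hGfin] using (top_le_iff.mp hPle))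
  by_cases hN : N = ⊤
  · have : eexp μ A = ⊥ := by
      rw [eexp, if_neg hP, ← hNdef, hN]
      simp [sub_eq_add_neg]
    rw [this, EReal.bot_add]
    exact bot_le
  have hN'le : N' ≤ N + G := by
    calc N' ≤ ∫⁻ ω, (epos (-(A ω)) + ENNReal.ofReal |g ω|) ∂μ := by
          refine lintegral_mono_ae ?_
          filter_upwards [hle, hAbot, hBbot] with ω hω h1 h2
          exact epos_neg_le h1 h2 hω
      _ = N + G := lintegral_add_left (measurable_epos.comp hA.neg) _
  have hN' : N' ≠ ⊤ := by
    intro h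
    rw [h] at hN'le
    exact (by simpa [ENNReal.add_eq_top, hGfin, hN] using (top_le_iff.mp hN'le))
  obtain ⟨hIa, hea⟩ := eexp_eq_integral μ A hA hAbot hP hN
  obtain ⟨hIb, heb⟩ := eexp_eq_integral μ B hB hBbot hP' hN'
  have hAtop : ∀ᵐ ω ∂μ, A ω ≠ ⊤ := by
    filter_upwards [ae_lt_top (measurable_epos.comp hA) hP] with ω hω h
    simp [Function.comp, h, epos_top] at hω
  have hBtop : ∀ᵐ ω ∂μ, B ω ≠ ⊤ := by
    filter_upwards [ae_lt_top (measurable_epos.comp hB) hP'] with ω hω h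
    simp [Function.comp, h, epos_top] at hω
  have hreal : ∀ᵐ ω ∂μ, (A ω).toReal + g ω ≤ (B ω).toReal := by
    filter_upwards [hle, hAbot, hBbot, hAtop, hBtop] with ω h1 h2 h3 h4 h5
    rw [← EReal.coe_toReal h4 h2, ← EReal.coe_toReal h5 h3, ← EReal.coe_add,
      EReal.coe_le_coe_iff] at h1
    exact h1
  rw [hea, heb, ← EReal.coe_add, EReal.coe_le_coe_iff, ← integral_add hIa hg]
  exact integral_mono_ae (hIa.add hg) hIb hreal

end Aux

/-- the adapted projection of an integrable selection of `∂f(x)` is a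
subgradient of `Ef` on `N^∞` at `x` for the pairing `⟨N^∞, N¹⟩`. -/
theorem stmt11 {T : ℕ} {n : Fin (T + 1) → ℕ} {Ω : Type*} [mF : MeasurableSpace Ω]
    (μ : Measure Ω) [IsProbabilityMeasure μ]
    (F : Fin (T + 1) → MeasurableSpace Ω) (hFle : ∀ t, F t ≤ mF) (hFmono : Monotone F)
    (f : (∀ t, Fin (n t) → ℝ) → Ω → EReal)
    (hmeas : Measurable[(inferInstance : MeasurableSpace (∀ t, Fin (n t) → ℝ)).prod mF]
      (Function.uncurry f))
    (hlsc : ∀ ω, LowerSemicontinuous (fun y => f y ω))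
    (hconv : ∀ ω, ∀ y z : ∀ t, Fin (n t) → ℝ, ∀ a b : ℝ, 0 ≤ a → 0 ≤ b → a + b = 1 →
      f (a • y + b • z) ω ≤ (a : EReal) * f y ω + (b : EReal) * f z ω)
    (hproper : ∀ ω, (∃ y, f y ω ≠ ⊤) ∧ ∀ y, f y ω ≠ ⊥)
    -- `x ∈ N^∞`: bounded and adapted
    (x : Ω → ∀ t, Fin (n t) → ℝ) (hxadapted : ∀ t, Measurable[F t] fun ω => x ω t)
    (hxbdd : ∃ C : ℝ, ∀ ω, ‖x ω‖ ≤ C)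
    -- `v ∈ L¹` is a selection of `∂f(x)`
    (v : Ω → ∀ t, Fin (n t) → ℝ) (hv : Integrable v μ)
    (hvsel : ∀ᵐ ω ∂μ, ∀ y : ∀ t, Fin (n t) → ℝ,
      f (x ω) ω + ((dotp (fun t => y t - x ω t) (v ω) : ℝ) : EReal) ≤ f y ω) :
    -- subgradient inequality on `N^∞` for the adapted projection `ᵒv`
    ∀ x' : Ω → ∀ t, Fin (n t) → ℝ, (∀ t, Measurable[F t] fun ω => x' ω t) →
      (∃ C : ℝ, ∀ ω, ‖x' ω‖ ≤ C) →
      @eexp Ω mF μ (fun ω => f (x ω) ω)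
          + ((∫ ω, dotp (x' ω) (aproj mF μ F v ω) - dotp (x ω) (aproj mF μ F v ω) ∂μ : ℝ)
              : EReal)
        ≤ @eexp Ω mF μ (fun ω => f (x' ω) ω) := by
  intro x' hx'ad hx'bdd
  obtain ⟨C, hC⟩ := hxbdd
  obtain ⟨C', hC'⟩ := hx'bdd
  -- coordinate facts
  have hw : ∀ t (i : Fin (n t)), Measurable[F t] (fun ω => x' ω t i - x ω t i) := fun t i =>
    ((measurable_pi_apply i).comp (hx'ad t)).sub ((measurable_pi_apply i).comp (hxadapted t))
  have hwmF : ∀ t (i : Fin (n t)), AEStronglyMeasurable (fun ω => x' ω t i - x ω t i) μ :=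
    fun t i => ((hw t i).mono (hFle t) le_rfl).aestronglyMeasurable
  have hwb : ∀ t (i : Fin (n t)) ω, ‖x' ω t i - x ω t i‖ ≤ C' + C := by
    intro t i ω
    have h1 : ‖x' ω t i‖ ≤ C' :=
      le_trans (le_trans (norm_le_pi_norm (x' ω t) i) (norm_le_pi_norm (x' ω) t)) (hC' ω)
    have h2 : ‖x ω t i‖ ≤ C :=
      le_trans (le_trans (norm_le_pi_norm (x ω t) i) (norm_le_pi_norm (x ω) t)) (hC ω)
    calc ‖x' ω t i - x ω t i‖ ≤ ‖x' ω t i‖ + ‖x ω t i‖ := norm_sub_le _ _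
      _ ≤ C' + C := add_le_add h1 h2
  have hvt : ∀ t, Integrable (fun ω => v ω t) μ := fun t => pi_integrable_coord hv t
  have hvti : ∀ t (i : Fin (n t)), Integrable (fun ω => v ω t i) μ :=
    fun t i => integrable_coord (hvt t) i
  have hovt : ∀ t, Integrable (fun ω => aproj mF μ F v ω t) μ := fun t => by
    haveI : SigmaFinite (μ.trim (hFle t)) := by
      haveI : IsFiniteMeasure (μ.trim (hFle t)) := isFiniteMeasure_trim _
      infer_instance
    exact integrable_condExp
  have hovti : ∀ t (i : Fin (n t)), Integrable (fun ω => aproj mF μ F v ω t i) μ :=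
    fun t i => integrable_coord (hovt t) i
  have hterm1 : ∀ t (i : Fin (n t)),
      Integrable (fun ω => (x' ω t i - x ω t i) * aproj mF μ F v ω t i) μ := fun t i => by
    have := (hovti t i).bdd_mul (hwmF t i) (Filter.Eventually.of_forall (hwb t i))
    simpa using this
  have hterm2 : ∀ t (i : Fin (n t)),
      Integrable (fun ω => (x' ω t i - x ω t i) * v ω t i) μ := fun t i => by
    have := (hvti t i).bdd_mul (hwmF t i) (Filter.Eventually.of_forall (hwb t i))
    simpa using this
  have hgint : Integrable (fun ω => dotp (fun t => x' ω t - x ω t) (v ω)) μ := by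
    have : Integrable (fun ω => ∑ t, ∑ i, (x' ω t i - x ω t i) * v ω t i) μ :=
      integrable_finset_sum _ (fun t _ => integrable_finset_sum _ (fun i _ => hterm2 t i))
    simpa [dotp] using this
  -- key identity: E⟨x'−x, ᵒv⟩ = E⟨x'−x, v⟩
  have key : ∀ t (i : Fin (n t)),
      ∫ ω, (x' ω t i - x ω t i) * aproj mF μ F v ω t i ∂μ
        = ∫ ω, (x' ω t i - x ω t i) * v ω t i ∂μ := by
    intro t i
    have hcc := condexp_coord μ (F t) (hFle t) (fun ω => v ω t) (hvt t) i
    have h1 : ∫ ω, (x' ω t i - x ω t i) * aproj mF μ F v ω t i ∂μ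
        = ∫ ω, (x' ω t i - x ω t i) * (μ[fun ω' => v ω' t i|F t]) ω ∂μ := by
      refine integral_congr_ae ?_
      filter_upwards [hcc] with ω hω
      simp only [aproj]
      rw [← hω]
    rw [h1, integral_mul_condexp μ (F t) (hFle t) _ _ (hw t i) (C' + C) (hwb t i) (hvti t i)]
  have hIeq : ∫ ω, dotp (x' ω) (aproj mF μ F v ω) - dotp (x ω) (aproj mF μ F v ω) ∂μ
      = ∫ ω, dotp (fun t => x' ω t - x ω t) (v ω) ∂μ := by
    have e0 : ∀ (c : ∀ t, Fin (n t) → ℝ) a b,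
        dotp a c - dotp b c = ∑ t, ∑ i, (a t i - b t i) * c t i := by
      intro c a b
      simp [dotp, ← Finset.sum_sub_distrib, sub_mul]
    calc ∫ ω, dotp (x' ω) (aproj mF μ F v ω) - dotp (x ω) (aproj mF μ F v ω) ∂μ
        = ∫ ω, ∑ t, ∑ i, (x' ω t i - x ω t i) * aproj mF μ F v ω t i ∂μ := by
          refine integral_congr_ae (Filter.Eventually.of_forall fun ω => ?_)
          exact e0 _ _ _
      _ = ∑ t, ∑ i, ∫ ω, (x' ω t i - x ω t i) * aproj mF μ F v ω t i ∂μ := by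
          rw [integral_finset_sum _
            (fun t _ => integrable_finset_sum _ (fun i _ => hterm1 t i))]
          exact Finset.sum_congr rfl fun t _ =>
            integral_finset_sum _ (fun i _ => hterm1 t i)
      _ = ∑ t, ∑ i, ∫ ω, (x' ω t i - x ω t i) * v ω t i ∂μ :=
          Finset.sum_congr rfl fun t _ => Finset.sum_congr rfl fun i _ => key t i
      _ = ∫ ω, ∑ t, ∑ i, (x' ω t i - x ω t i) * v ω t i ∂μ := by
          rw [integral_finset_sum _
            (fun t _ => integrable_finset_sum _ (fun i _ => hterm2 t i))]
          exact (Finset.sum_congr rfl fun t _ =>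
            (integral_finset_sum _ (fun i _ => hterm2 t i)).symm)
      _ = ∫ ω, dotp (fun t => x' ω t - x ω t) (v ω) ∂μ := by
          refine integral_congr_ae (Filter.Eventually.of_forall fun ω => ?_)
          simp [dotp]
  -- measurability of the composed integrands
  have hxm : Measurable x :=
    measurable_pi_lambda x (fun t => (hxadapted t).mono (hFle t) le_rfl)
  have hx'm : Measurable x' :=
    measurable_pi_lambda x' (fun t => (hx'ad t).mono (hFle t) le_rfl)
  have hAmeas : Measurable (fun ω => f (x ω) ω) := hmeas.comp (hxm.prodMk measurable_id)
  have hBmeas : Measurable (fun ω => f (x' ω) ω) := hmeas.comp (hx'm.prodMk measurable_id)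
  rw [hIeq]
  refine eexp_add_le μ _ _ _ hAmeas hBmeas hgint
    (Filter.Eventually.of_forall fun ω => (hproper ω).2 _)
    (Filter.Eventually.of_forall fun ω => (hproper ω).2 _) ?_
  filter_upwards [hvsel] with ω h
  exact h (x' ω)
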